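/- Let d ≥ 1 and let v : ℝ^d × [0,1] → ℝ^d be continuous with ‖v(x,t) − v(y,t)‖ ≤ L‖x − y‖ for all x, y ∈ ℝ^d, t ∈ [0,1], where L > 0. Let W be a nonempty family of continuous vector fields w : ℝ^d × [0,1] → ℝ^d, each uniformly Lipschitz in its first argument. Denote by F[u] := X_u(·,1) the time-one flow map of a field u, and set Φ := F[v]. Then the infimum over w ∈ W of sup_{ξ ∈ ℝ^d} ‖Φ(ξ) − F[w](ξ)‖ is at most ((e^{L} − 1)/L) times the infimum over w ∈ W of sup_{(x,t) ∈ ℝ^d × [0,1]} ‖v(x,t) − w(x,t)‖. -/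

import Mathlib

open scoped ENNReal

/-- Let `v` be continuous and `L`-Lipschitz in its first argument, and let `W`
be a nonempty family of continuous vector fields, each uniformly Lipschitz in its first
argument. Denoting by `F[u] = XF u (·) 1` the time-one flow map of a field `u` and
`Φ = F[v]`, the infimum over `w ∈ W` of `sup_ξ ‖Φ(ξ) − F[w](ξ)‖` is at most
`(e^L − 1)/L` times the infimum over `w ∈ W` of `sup_{(x,t) ∈ ℝ^d × [0,1]} ‖v(x,t) − w(x,t)‖`. -/
theorem flow_map_best_approximation
    (d : ℕ) (hd : 1 ≤ d)
    (v : EuclideanSpace ℝ (Fin d) → ℝ → EuclideanSpace ℝ (Fin d))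
    (hv_cont : Continuous (fun p : EuclideanSpace ℝ (Fin d) × ℝ => v p.1 p.2))
    (L : ℝ) (hL : 0 < L)
    (hv_lip : ∀ t ∈ Set.Icc (0:ℝ) 1, ∀ x y : EuclideanSpace ℝ (Fin d),
      ‖v x t - v y t‖ ≤ L * ‖x - y‖)
    (W : Set (EuclideanSpace ℝ (Fin d) → ℝ → EuclideanSpace ℝ (Fin d)))
    (hW_ne : W.Nonempty)
    (hW_cont : ∀ w ∈ W, Continuous (fun p : EuclideanSpace ℝ (Fin d) × ℝ => w p.1 p.2))
    (hW_lip : ∀ w ∈ W, ∃ Lw > (0:ℝ), ∀ t ∈ Set.Icc (0:ℝ) 1,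
      ∀ x y : EuclideanSpace ℝ (Fin d), ‖w x t - w y t‖ ≤ Lw * ‖x - y‖)
    -- `XF u` is the flow of the vector field `u`, for `u = v` and for each `u ∈ W`
    (XF : (EuclideanSpace ℝ (Fin d) → ℝ → EuclideanSpace ℝ (Fin d)) →
      EuclideanSpace ℝ (Fin d) → ℝ → EuclideanSpace ℝ (Fin d))
    (hXF0 : ∀ u, u = v ∨ u ∈ W → ∀ ξ, XF u ξ 0 = ξ)
    (hXF : ∀ u, u = v ∨ u ∈ W → ∀ ξ, ∀ t ∈ Set.Icc (0:ℝ) 1,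
      HasDerivAt (XF u ξ) (u (XF u ξ t) t) t) :
    (⨅ w : W, ⨆ ξ : EuclideanSpace ℝ (Fin d),
        (‖XF v ξ 1 - XF w.1 ξ 1‖₊ : ℝ≥0∞))
      ≤ ENNReal.ofReal ((Real.exp L - 1) / L) *
        ⨅ w : W, ⨆ x : EuclideanSpace ℝ (Fin d), ⨆ t ∈ Set.Icc (0:ℝ) 1,
          (‖v x t - w.1 x t‖₊ : ℝ≥0∞) := by
  classical
  have hexp : 0 < Real.exp L - 1 := sub_pos.2 (by
    have := Real.add_one_lt_exp hL.ne'
    linarith)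
  have hc0 : 0 < (Real.exp L - 1) / L := div_pos hexp hL
  set C : ℝ≥0∞ := ENNReal.ofReal ((Real.exp L - 1) / L) with hC
  have hCne0 : C ≠ 0 := (ENNReal.ofReal_pos.2 hc0).ne'
  have hCtop : C ≠ ∞ := ENNReal.ofReal_ne_top
  set S : W → ℝ≥0∞ := fun w => ⨆ x : EuclideanSpace ℝ (Fin d), ⨆ t ∈ Set.Icc (0:ℝ) 1,
      (‖v x t - w.1 x t‖₊ : ℝ≥0∞) with hS
  have main : ∀ w : W, (⨆ ξ : EuclideanSpace ℝ (Fin d),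
      (‖XF v ξ 1 - XF w.1 ξ 1‖₊ : ℝ≥0∞)) ≤ C * S w := by
    intro w
    by_cases hSw : S w = ∞
    · rw [hSw, ENNReal.mul_top hCne0]
      exact le_top
    -- real-valued sup bound
    set ε : ℝ := (S w).toReal with hε
    have hε0 : 0 ≤ ε := ENNReal.toReal_nonneg
    have hpt : ∀ x : EuclideanSpace ℝ (Fin d), ∀ t ∈ Set.Icc (0:ℝ) 1,
        ‖v x t - w.1 x t‖ ≤ ε := by
      intro x t ht
      have h1 : (‖v x t - w.1 x t‖₊ : ℝ≥0∞) ≤ S w :=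
        le_iSup_of_le x (le_iSup_of_le t (le_iSup_of_le ht le_rfl))
      have := ENNReal.toReal_mono hSw h1
      simpa using this
    -- Lipschitz extension of v in time
    set K : NNReal := ⟨L, hL.le⟩ with hK
    set π : ℝ → ℝ := fun t => min 1 (max 0 t) with hπ
    have hπmem : ∀ t, π t ∈ Set.Icc (0:ℝ) 1 := fun t =>
      ⟨le_min zero_le_one (le_max_left 0 t), min_le_left _ _⟩
    have hπid : ∀ t ∈ Set.Icc (0:ℝ) 1, π t = t := by
      intro t ht
      simp only [hπ, max_eq_right ht.1, min_eq_right ht.2]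
    set vv : ℝ → EuclideanSpace ℝ (Fin d) → EuclideanSpace ℝ (Fin d) :=
      fun t x => v x (π t) with hvv
    have hvvlip : ∀ t, LipschitzWith K (vv t) := by
      intro t
      apply LipschitzWith.of_dist_le_mul
      intro x y
      rw [dist_eq_norm, dist_eq_norm]
      exact hv_lip (π t) (hπmem t) x y
    refine iSup_le fun ξ => ?_
    -- Grönwall estimate for this ξ
    have hbound : dist (XF v ξ 1) (XF w.1 ξ 1) ≤ gronwallBound 0 K (0 + ε) (1 - 0) := by
      refine dist_le_of_approx_trajectories_ODE hvvlip
        (fun t ht => ((hXF v (Or.inl rfl) ξ t ht).continuousAt).continuousWithinAt)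
        (fun t ht => (hXF v (Or.inl rfl) ξ t (Set.Ico_subset_Icc_self ht)).hasDerivWithinAt)
        (fun t ht => ?_)
        (fun t ht => ((hXF w.1 (Or.inr w.2) ξ t ht).continuousAt).continuousWithinAt)
        (fun t ht => (hXF w.1 (Or.inr w.2) ξ t (Set.Ico_subset_Icc_self ht)).hasDerivWithinAt)
        (fun t ht => ?_) ?_ 1 ⟨zero_le_one, le_rfl⟩
      · simp only [hvv]
        rw [hπid t (Set.Ico_subset_Icc_self ht), dist_self]
      · have ht' : t ∈ Set.Icc (0:ℝ) 1 := Set.Ico_subset_Icc_self ht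
        simp only [hvv]
        rw [hπid t ht', dist_eq_norm, norm_sub_rev]
        exact hpt _ t ht'
      · rw [hXF0 v (Or.inl rfl) ξ, hXF0 w.1 (Or.inr w.2) ξ, dist_self]
    have hKne : (K : ℝ) ≠ 0 := hL.ne'
    rw [gronwallBound_of_K_ne_0 hKne] at hbound
    have hgb : dist (XF v ξ 1) (XF w.1 ξ 1) ≤ (Real.exp L - 1) / L * ε := by
      have : (K : ℝ) = L := rfl
      rw [this] at hbound
      calc dist (XF v ξ 1) (XF w.1 ξ 1)
          ≤ 0 * Real.exp (L * (1 - 0)) + (0 + ε) / L * (Real.exp (L * (1 - 0)) - 1) := hbound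
        _ = (Real.exp L - 1) / L * ε := by field_simp; ring
    have : (‖XF v ξ 1 - XF w.1 ξ 1‖₊ : ℝ≥0∞) ≤ ENNReal.ofReal ((Real.exp L - 1) / L * ε) := by
      rw [show (‖XF v ξ 1 - XF w.1 ξ 1‖₊ : ℝ≥0∞) = ENNReal.ofReal ‖XF v ξ 1 - XF w.1 ξ 1‖ from
        (ofReal_norm _).symm]
      exact ENNReal.ofReal_le_ofReal (by rwa [← dist_eq_norm])
    refine this.trans ?_
    rw [ENNReal.ofReal_mul hc0.le, hC, hε, ENNReal.ofReal_toReal hSw]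
  calc (⨅ w : W, ⨆ ξ : EuclideanSpace ℝ (Fin d), (‖XF v ξ 1 - XF w.1 ξ 1‖₊ : ℝ≥0∞))
      ≤ ⨅ w : W, C * S w := iInf_mono main
    _ = C * ⨅ w : W, S w := (ENNReal.mul_iInf_of_ne hCne0 hCtop).symm
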